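/- Let M be a monotone Möbius structure on S¹, a=(x,y), and q=(a,b), q'=(a,b'), q''=(a,b'') harmonic pairs on the left line lh_a such that b' separates b and b'' (b and b'' lie on different open arcs determined by b'). Then the distance is additive: |qq''| = |qq'| + |q'q''|. -/

import Mathlib

open scoped Classical

section Mobius

variable {X : Type*}

/-- The pairs `(x,y)` and `(z,u)` separate each other on the circularly ordered set `X`:
`z` and `u` lie on different open arcs determined by `x` and `y`. -/
def PairSeparates [CircularOrder X] (x y z u : X) : Prop :=
  (sbtw x z y ∧ sbtw y u x) ∨ (sbtw x u y ∧ sbtw y z x)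

/-- The pair `(d₁,d₂)` separates the pairs `(b₁,b₂)` and `(c₁,c₂)`: the latter two pairs lie
on different open arcs determined by `(d₁,d₂)`. -/
def ArcSepPairs [CircularOrder X] (d₁ d₂ b₁ b₂ c₁ c₂ : X) : Prop :=
  (sbtw d₁ b₁ d₂ ∧ sbtw d₁ b₂ d₂ ∧ sbtw d₂ c₁ d₁ ∧ sbtw d₂ c₂ d₁) ∨
  (sbtw d₁ c₁ d₂ ∧ sbtw d₁ c₂ d₂ ∧ sbtw d₂ b₁ d₁ ∧ sbtw d₂ b₂ d₁)

/-- Two pairs `(b₁,b₂)` and `(c₁,c₂)` of points are in the strong causal relation: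
either of them lies entirely in one open arc determined by the other. -/
def StrongCausal [CircularOrder X] (b₁ b₂ c₁ c₂ : X) : Prop :=
  (sbtw b₁ c₁ b₂ ∧ sbtw b₁ c₂ b₂) ∨ (sbtw b₂ c₁ b₁ ∧ sbtw b₂ c₂ b₁) ∨
  (sbtw c₁ b₁ c₂ ∧ sbtw c₁ b₂ c₂) ∨ (sbtw c₂ b₁ c₁ ∧ sbtw c₂ b₂ c₁)

/-- The topology generated by open balls of the semi-metrics with infinitely remote points,
centered at finite points. `D ω x y` denotes `|xy|` in the semi-metric with infinitely remote
point `ω`. -/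
def MTopology (D : X → X → X → ℝ) : TopologicalSpace X :=
  TopologicalSpace.generateFrom
    {s | ∃ ω x r, x ≠ ω ∧ s = {y | y ≠ ω ∧ D ω x y < r}}

/-- A (ptolemaic) monotone Möbius structure on a circle `X`, presented by the family of its
semi-metrics with infinitely remote points: `D ω x y` is the distance `|xy|_ω` in the
semi-metric with infinitely remote point `ω` (defined for `x, y ≠ ω`).  The semi-metrics
are pairwise related by metric inversion (up to homothety), every one of them satisfies the
Ptolemy inequality, the monotonicity axiom (M) holds, the M-topology is the given topology
of `X`, and `X` is homeomorphic to the circle. -/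
structure MonotoneMobius (X : Type*) [CircularOrder X] [t : TopologicalSpace X] where
  D : X → X → X → ℝ
  symm : ∀ ω x y, D ω x y = D ω y x
  refl : ∀ ω x, D ω x x = 0
  pos : ∀ ω x y, x ≠ y → x ≠ ω → y ≠ ω → 0 < D ω x y
  inversion : ∀ ω ω', ω ≠ ω' → ∃ c : ℝ, 0 < c ∧ ∀ x y, x ≠ ω → y ≠ ω → x ≠ ω' → y ≠ ω' →
    D ω' x y = c * D ω x y / (D ω x ω' * D ω y ω')
  ptolemy : ∀ ω x y z u, x ≠ ω → y ≠ ω → z ≠ ω → u ≠ ω →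
    D ω x y * D ω z u ≤ D ω x z * D ω y u + D ω x u * D ω y z
  mono : ∀ ω x y z u, x ≠ ω → y ≠ ω → z ≠ ω → u ≠ ω → PairSeparates x y z u →
    D ω x z * D ω y u < D ω x y * D ω z u ∧ D ω x u * D ω y z < D ω x y * D ω z u
  mtop : MTopology D = t
  circle : Nonempty (X ≃ₜ AddCircle (1 : ℝ))

variable [CircularOrder X] [TopologicalSpace X]

/-- The 4-tuple `(x,y,z,u)` is harmonic (of the first type): `|xz||yu| = |xu||yz|` in any
semi-metric of the Möbius structure. -/
def MonotoneMobius.Harmonic (M : MonotoneMobius X) (x y z u : X) : Prop :=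
  ∀ ω, ω ≠ x → ω ≠ y → ω ≠ z → ω ≠ u →
    M.D ω x z * M.D ω y u = M.D ω x u * M.D ω y z

/-- The distance `|q q'| = |ln ((|xp'||yp|)/(|xp||yp'|))|` between two harmonic pairs
`q = ((x,y),(p,·))` and `q' = ((x,y),(p',·))` with common axis `(x,y)`; computed here in the
semi-metric with infinitely remote point `x`, where it equals `|ln (|yp|_x / |yp'|_x)|`. -/
noncomputable def MonotoneMobius.lineDist (M : MonotoneMobius X) (x y p p' : X) : ℝ :=
  |Real.log (M.D x y p / M.D x y p')|

end Mobius


section Aux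

variable {X : Type*}

section CircAux
variable {α : Type*} [CircularOrder α]

lemma sbtw_ne12 {a b c : α} (h : sbtw a b c) : a ≠ b := fun e => sbtw_irrefl_left (e ▸ h)
lemma sbtw_ne23 {a b c : α} (h : sbtw a b c) : b ≠ c := fun e => sbtw_irrefl_right (e ▸ h)

lemma sb3 {a b c : α} (hab : a ≠ b) (hac : a ≠ c) (hbc : b ≠ c) :
    sbtw a b c ∨ sbtw a c b := by
  rcases btw_total a b c with h | h
  · left
    refine sbtw_of_btw_not_btw h fun h' => ?_
    rcases h.antisymm h' with e | e | e
    exacts [hab e, hbc e, hac e.symm]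
  · right
    have hacb : btw a c b := h.cyclic_left.cyclic_left
    refine sbtw_of_btw_not_btw hacb fun h' => ?_
    rcases hacb.antisymm h' with e | e | e
    exacts [hac e, hbc e.symm, hab e.symm]

lemma sbtwL1 {p a b q : α} (h1 : sbtw p a b) (h2 : sbtw p b q) : sbtw a b q := by
  have h2' : sbtw q p b := sbtw_cyclic_left (sbtw_cyclic_left h2)
  exact sbtw_cyclic_left (h2'.trans_left h1)

lemma sbtwL2 {p a q b : α} (h1 : sbtw p a q) (h2 : sbtw q b p) : sbtw a q b := by
  have h1' : sbtw q p a := sbtw_cyclic_left (sbtw_cyclic_left h1)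
  exact sbtw_cyclic_left (sbtw_cyclic_left (sbtw_trans_right h2 h1'))

lemma circ_tri {a b c d : α} (hab : a ≠ b) (hac : a ≠ c) (had : a ≠ d)
    (hbc : b ≠ c) (hbd : b ≠ d) (hcd : c ≠ d) :
    PairSeparates a b c d ∨ PairSeparates a c b d ∨ PairSeparates a d b c := by
  rcases sb3 hac hab hbc.symm with hc | hc <;> rcases sb3 had hab hbd.symm with hd | hd
  · rcases sb3 hac had hcd with h | h
    · exact Or.inr (Or.inr (Or.inr ⟨h, sbtw_cyclic_left hd⟩))
    · exact Or.inr (Or.inl (Or.inr ⟨h, sbtw_cyclic_left hc⟩))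
  · exact Or.inl (Or.inl ⟨hc, sbtw_cyclic_left hd⟩)
  · exact Or.inl (Or.inr ⟨hd, sbtw_cyclic_left hc⟩)
  · have hc' : sbtw b c a := sbtw_cyclic_left hc
    have hd' : sbtw b d a := sbtw_cyclic_left hd
    rcases sb3 hbc hbd hcd with h | h
    · exact Or.inr (Or.inl (Or.inl ⟨hc, sbtwL1 h hd'⟩))
    · exact Or.inr (Or.inr (Or.inl ⟨hd, sbtwL1 h hc'⟩))

lemma ord_lemma {x y a c e b : α}
    (ha : sbtw x a y) (hc : sbtw x c y) (he : sbtw x e y) (hb : sbtw y b x)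
    (hac : a ≠ c) (hce : c ≠ e)
    (h1 : ¬(sbtw c a b ∧ sbtw c e b)) (h2 : ¬(sbtw b a c ∧ sbtw b e c)) :
    (sbtw x a c ∧ sbtw x c e) ∨ (sbtw x e c ∧ sbtw x c a) := by
  have hxa := sbtw_ne12 ha
  have hxc := sbtw_ne12 hc
  have hxe := sbtw_ne12 he
  have hcyb : sbtw c y b := sbtwL2 hc hb
  have hbxc : sbtw b x c := sbtwL2 hb hc
  have before : ∀ w, sbtw x c w → sbtw x w y → sbtw c w b := fun w g hw =>
    sbtw_trans_right (sbtwL1 g hw) hcyb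
  have after : ∀ w, sbtw x w c → sbtw b w c := fun w g => hbxc.trans_left g
  rcases sb3 hxa hxc hac with g1 | g1 <;> rcases sb3 hxc hxe hce with g2 | g2
  · exact Or.inl ⟨g1, g2⟩
  · exact absurd ⟨after a g1, after e g2⟩ h2
  · exact absurd ⟨before a g1 ha, before e g2 he⟩ h1
  · exact Or.inr ⟨g2, g1⟩

end CircAux

variable [CircularOrder X] [TopologicalSpace X]

lemma harmonic_sep (M : MonotoneMobius X) (ω x y p q : X)
    (hxy : x ≠ y) (hxp : x ≠ p) (hxq : x ≠ q) (hyp : y ≠ p) (hyq : y ≠ q) (hpq : p ≠ q)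
    (hωx : ω ≠ x) (hωy : ω ≠ y) (hωp : ω ≠ p) (hωq : ω ≠ q)
    (h : M.Harmonic x y p q) : PairSeparates x y p q := by
  have hh := h ω hωx hωy hωp hωq
  rcases circ_tri hxy hxp hxq hyp hyq hpq with hs | hs | hs
  · exact hs
  · have hm := (M.mono ω x p y q hωx.symm hωp.symm hωy.symm hωq.symm hs).2
    rw [M.symm ω p y] at hm
    rw [hh] at hm
    exact absurd hm (lt_irrefl _)
  · have hm := (M.mono ω x q y p hωx.symm hωq.symm hωy.symm hωp.symm hs).2
    rw [M.symm ω q y, ← hh] at hm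
    exact absurd hm (lt_irrefl _)

lemma mono_cmp (M : MonotoneMobius X) (ω x y p q : X)
    (hωx : ω ≠ x) (hωy : ω ≠ y) (hωp : ω ≠ p) (hωq : ω ≠ q)
    (hq2 : sbtw x q y) (h3 : sbtw x p q) :
    M.D ω x p * M.D ω y q < M.D ω x q * M.D ω y p := by
  have hps : PairSeparates x q y p := Or.inr ⟨h3, sbtw_cyclic_left hq2⟩
  have hm := (M.mono ω x q y p hωx.symm hωq.symm hωy.symm hωp.symm hps).2
  rwa [M.symm ω q y] at hm

end Aux

/-- Let `M` be a monotone Möbius structure on the circle, `a = (x,y)`, and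
`q = (a,b)`, `q' = (a,b')`, `q'' = (a,b'')` harmonic pairs on the left line `lh_a`
(`b = (z,u)`, `b' = (z',u')`, `b'' = (z'',u'')`) such that `b'` separates `b` and `b''`.
Then the distance `|qq'| = |ln((|xz'||yz|)/(|xz||yz'|))|` (computed in any semi-metric of
`M`) is additive: `|qq''| = |qq'| + |q'q''|`. -/
theorem stmt13 {X : Type*} [CircularOrder X] [TopologicalSpace X]
    (M : MonotoneMobius X) (x y z u z' u' z'' u'' : X)
    (hxy : x ≠ y) (hxz : x ≠ z) (hxu : x ≠ u) (hyz : y ≠ z) (hyu : y ≠ u) (hzu : z ≠ u)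
    (hxz' : x ≠ z') (hxu' : x ≠ u') (hyz' : y ≠ z') (hyu' : y ≠ u') (hzu' : z' ≠ u')
    (hxz'' : x ≠ z'') (hxu'' : x ≠ u'') (hyz'' : y ≠ z'') (hyu'' : y ≠ u'') (hzu'' : z'' ≠ u'')
    (hq : M.Harmonic x y z u) (hq' : M.Harmonic x y z' u') (hq'' : M.Harmonic x y z'' u'')
    (hsep : ArcSepPairs z' u' z u z'' u'') :
    ∀ ω : X, ω ≠ x → ω ≠ y → ω ≠ z → ω ≠ u → ω ≠ z' → ω ≠ u' → ω ≠ z'' → ω ≠ u'' →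
      |Real.log (M.D ω x z'' * M.D ω y z / (M.D ω x z * M.D ω y z''))| =
        |Real.log (M.D ω x z' * M.D ω y z / (M.D ω x z * M.D ω y z'))| +
        |Real.log (M.D ω x z'' * M.D ω y z' / (M.D ω x z' * M.D ω y z''))| := by
  intro ω hω1 hω2 hω3 hω4 hω5 hω6 hω7 hω8
  -- positivity
  have pxz : 0 < M.D ω x z := M.pos ω x z hxz hω1.symm hω3.symm
  have pyz : 0 < M.D ω y z := M.pos ω y z hyz hω2.symm hω3.symm
  have pxz' : 0 < M.D ω x z' := M.pos ω x z' hxz' hω1.symm hω5.symm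
  have pyz' : 0 < M.D ω y z' := M.pos ω y z' hyz' hω2.symm hω5.symm
  have pxz'' : 0 < M.D ω x z'' := M.pos ω x z'' hxz'' hω1.symm hω7.symm
  have pyz'' : 0 < M.D ω y z'' := M.pos ω y z'' hyz'' hω2.symm hω7.symm
  -- harmonic identities at ω
  have hzu0 : M.D ω x z * M.D ω y u = M.D ω x u * M.D ω y z := hq ω hω1 hω2 hω3 hω4
  have hzu0' : M.D ω x z' * M.D ω y u' = M.D ω x u' * M.D ω y z' := hq' ω hω1 hω2 hω5 hω6
  have hzu0'' : M.D ω x z'' * M.D ω y u'' = M.D ω x u'' * M.D ω y z'' := hq'' ω hω1 hω2 hω7 hω8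
  -- each pair is separated by (x,y)
  have PS1 : PairSeparates x y z u :=
    harmonic_sep M ω x y z u hxy hxz hxu hyz hyu hzu hω1 hω2 hω3 hω4 hq
  have PS2 : PairSeparates x y z' u' :=
    harmonic_sep M ω x y z' u' hxy hxz' hxu' hyz' hyu' hzu' hω1 hω2 hω5 hω6 hq'
  have PS3 : PairSeparates x y z'' u'' :=
    harmonic_sep M ω x y z'' u'' hxy hxz'' hxu'' hyz'' hyu'' hzu'' hω1 hω2 hω7 hω8 hq''
  -- consequences of hsep
  have hopp1 : ∀ w w', (w = z ∨ w = u) → (w' = z'' ∨ w' = u'') →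
      ¬(sbtw z' w u' ∧ sbtw z' w' u') := by
    intro w w' hw hw' h
    rcases hsep with ⟨s1, s2, s3, s4⟩ | ⟨s1, s2, s3, s4⟩
    · rcases hw' with rfl | rfl
      · exact sbtw_asymm s3 h.2
      · exact sbtw_asymm s4 h.2
    · rcases hw with rfl | rfl
      · exact sbtw_asymm s3 h.1
      · exact sbtw_asymm s4 h.1
  have hopp2 : ∀ w w', (w = z ∨ w = u) → (w' = z'' ∨ w' = u'') →
      ¬(sbtw u' w z' ∧ sbtw u' w' z') := by
    intro w w' hw hw' h
    rcases hsep with ⟨s1, s2, s3, s4⟩ | ⟨s1, s2, s3, s4⟩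
    · rcases hw with rfl | rfl
      · exact sbtw_asymm s1 h.1
      · exact sbtw_asymm s2 h.1
    · rcases hw' with rfl | rfl
      · exact sbtw_asymm s1 h.2
      · exact sbtw_asymm s2 h.2
  have hneZ : ∀ w, (w = z ∨ w = u ∨ w = z'' ∨ w = u'') → w ≠ z' ∧ w ≠ u' := by
    intro w hw
    rcases hsep with ⟨s1, s2, s3, s4⟩ | ⟨s1, s2, s3, s4⟩ <;> rcases hw with rfl | rfl | rfl | rfl
    · exact ⟨(sbtw_ne12 s1).symm, sbtw_ne23 s1⟩
    · exact ⟨(sbtw_ne12 s2).symm, sbtw_ne23 s2⟩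
    · exact ⟨sbtw_ne23 s3, (sbtw_ne12 s3).symm⟩
    · exact ⟨sbtw_ne23 s4, (sbtw_ne12 s4).symm⟩
    · exact ⟨sbtw_ne23 s3, (sbtw_ne12 s3).symm⟩
    · exact ⟨sbtw_ne23 s4, (sbtw_ne12 s4).symm⟩
    · exact ⟨(sbtw_ne12 s1).symm, sbtw_ne23 s1⟩
    · exact ⟨(sbtw_ne12 s2).symm, sbtw_ne23 s2⟩
  -- pick the representative of each pair lying in the arc (x, y)
  obtain ⟨a, haz, haA, haρ⟩ : ∃ w, (w = z ∨ w = u) ∧ sbtw x w y ∧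
      M.D ω y w * M.D ω x z = M.D ω y z * M.D ω x w := by
    rcases PS1 with ⟨h1, h2⟩ | ⟨h1, h2⟩
    · exact ⟨z, Or.inl rfl, h1, by ring⟩
    · exact ⟨u, Or.inr rfl, h1, by linear_combination hzu0⟩
  obtain ⟨e, hez, heA, heρ⟩ : ∃ w, (w = z'' ∨ w = u'') ∧ sbtw x w y ∧
      M.D ω y w * M.D ω x z'' = M.D ω y z'' * M.D ω x w := by
    rcases PS3 with ⟨h1, h2⟩ | ⟨h1, h2⟩
    · exact ⟨z'', Or.inl rfl, h1, by ring⟩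
    · exact ⟨u'', Or.inr rfl, h1, by linear_combination hzu0''⟩
  obtain ⟨c, b, hcb, hcA, hbB, hcρ⟩ : ∃ cc bb, ((cc = z' ∧ bb = u') ∨ (cc = u' ∧ bb = z')) ∧
      sbtw x cc y ∧ sbtw y bb x ∧
      M.D ω y cc * M.D ω x z' = M.D ω y z' * M.D ω x cc := by
    rcases PS2 with ⟨h1, h2⟩ | ⟨h1, h2⟩
    · exact ⟨z', u', Or.inl ⟨rfl, rfl⟩, h1, h2, by ring⟩
    · exact ⟨u', z', Or.inr ⟨rfl, rfl⟩, h1, h2, by linear_combination hzu0'⟩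
  -- ω distinct from the representatives
  have hωa : ω ≠ a := by rcases haz with rfl | rfl; exacts [hω3, hω4]
  have hωe : ω ≠ e := by rcases hez with rfl | rfl; exacts [hω7, hω8]
  have hωc : ω ≠ c := by rcases hcb with ⟨rfl, -⟩ | ⟨rfl, -⟩; exacts [hω5, hω6]
  -- distinctness needed for the ordering lemma
  have haM : a = z ∨ a = u ∨ a = z'' ∨ a = u'' := by
    rcases haz with rfl | rfl; exacts [Or.inl rfl, Or.inr (Or.inl rfl)]
  have heM : e = z ∨ e = u ∨ e = z'' ∨ e = u'' := by
    rcases hez with rfl | rfl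
    exacts [Or.inr (Or.inr (Or.inl rfl)), Or.inr (Or.inr (Or.inr rfl))]
  have hac : a ≠ c := by
    have h := hneZ a haM
    rcases hcb with ⟨rfl, -⟩ | ⟨rfl, -⟩; exacts [h.1, h.2]
  have hce : c ≠ e := by
    have h := hneZ e heM
    rcases hcb with ⟨rfl, -⟩ | ⟨rfl, -⟩; exacts [h.1.symm, h.2.symm]
  -- the separation hypotheses for the ordering lemma
  have hO1 : ¬(sbtw c a b ∧ sbtw c e b) := by
    rcases hcb with ⟨rfl, rfl⟩ | ⟨rfl, rfl⟩
    · exact hopp1 a e haz hez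
    · exact hopp2 a e haz hez
  have hO2 : ¬(sbtw b a c ∧ sbtw b e c) := by
    rcases hcb with ⟨rfl, rfl⟩ | ⟨rfl, rfl⟩
    · exact hopp2 a e haz hez
    · exact hopp1 a e haz hez
  have hord := ord_lemma haA hcA heA hbB hac hce hO1 hO2
  -- positivity for the representatives
  have pxa : 0 < M.D ω x a := M.pos ω x a (sbtw_ne12 haA) hω1.symm hωa.symm
  have pxc : 0 < M.D ω x c := M.pos ω x c (sbtw_ne12 hcA) hω1.symm hωc.symm
  have pxe : 0 < M.D ω x e := M.pos ω x e (sbtw_ne12 heA) hω1.symm hωe.symm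
  -- ratios agree with those of z, z', z''
  have ea : M.D ω y a / M.D ω x a = M.D ω y z / M.D ω x z := by
    rw [div_eq_div_iff pxa.ne' pxz.ne']; exact haρ
  have ec : M.D ω y c / M.D ω x c = M.D ω y z' / M.D ω x z' := by
    rw [div_eq_div_iff pxc.ne' pxz'.ne']; exact hcρ
  have ee : M.D ω y e / M.D ω x e = M.D ω y z'' / M.D ω x z'' := by
    rw [div_eq_div_iff pxe.ne' pxz''.ne']; exact heρ
  -- the key ordering of the ratios
  have key : (M.D ω y z / M.D ω x z < M.D ω y z' / M.D ω x z' ∧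
        M.D ω y z' / M.D ω x z' < M.D ω y z'' / M.D ω x z'') ∨
      (M.D ω y z'' / M.D ω x z'' < M.D ω y z' / M.D ω x z' ∧
        M.D ω y z' / M.D ω x z' < M.D ω y z / M.D ω x z) := by
    rcases hord with ⟨g1, g2⟩ | ⟨g1, g2⟩
    · right
      constructor
      · rw [← ec, ← ee, div_lt_div_iff₀ pxe pxc]
        have hm := mono_cmp M ω x y c e hω1 hω2 hωc hωe heA g2
        nlinarith [hm]
      · rw [← ea, ← ec, div_lt_div_iff₀ pxc pxa]
        have hm := mono_cmp M ω x y a c hω1 hω2 hωa hωc hcA g1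
        nlinarith [hm]
    · left
      constructor
      · rw [← ea, ← ec, div_lt_div_iff₀ pxa pxc]
        have hm := mono_cmp M ω x y c a hω1 hω2 hωc hωa haA g2
        nlinarith [hm]
      · rw [← ec, ← ee, div_lt_div_iff₀ pxc pxe]
        have hm := mono_cmp M ω x y e c hω1 hω2 hωe hωc hcA g1
        nlinarith [hm]
  -- rewrite the goal in terms of the ratios
  have pr1 : 0 < M.D ω y z / M.D ω x z := div_pos pyz pxz
  have pr2 : 0 < M.D ω y z' / M.D ω x z' := div_pos pyz' pxz'
  have pr3 : 0 < M.D ω y z'' / M.D ω x z'' := div_pos pyz'' pxz''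
  have E1 : M.D ω x z'' * M.D ω y z / (M.D ω x z * M.D ω y z'') =
      (M.D ω y z / M.D ω x z) / (M.D ω y z'' / M.D ω x z'') := by
    field_simp
  have E2 : M.D ω x z' * M.D ω y z / (M.D ω x z * M.D ω y z') =
      (M.D ω y z / M.D ω x z) / (M.D ω y z' / M.D ω x z') := by
    field_simp
  have E3 : M.D ω x z'' * M.D ω y z' / (M.D ω x z' * M.D ω y z'') =
      (M.D ω y z' / M.D ω x z') / (M.D ω y z'' / M.D ω x z'') := by
    field_simp
  rw [E1, E2, E3, Real.log_div pr1.ne' pr3.ne', Real.log_div pr1.ne' pr2.ne',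
    Real.log_div pr2.ne' pr3.ne']
  rcases key with ⟨k1, k2⟩ | ⟨k1, k2⟩
  · have l1 := Real.log_lt_log pr1 k1
    have l2 := Real.log_lt_log pr2 k2
    rw [abs_of_neg (by linarith), abs_of_neg (by linarith), abs_of_neg (by linarith)]
    ring
  · have l1 := Real.log_lt_log pr3 k1
    have l2 := Real.log_lt_log pr2 k2
    rw [abs_of_pos (by linarith), abs_of_pos (by linarith), abs_of_pos (by linarith)]
    ring
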